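/- Let p ∈ (0,∞) and δ > 0. There exists a real constant C_{p,δ} ∈ (0,∞) such that, for every real-valued random variable Z with Z ∈ L^{p+δ}(ℙ) and every integer N ≥ 1, one has e_{N,p}(Z) ≤ C_{p,δ} · σ_{p+δ}(Z) · N^{−1}, where e_{N,p}(Z) := inf { (E[min_{z∈Γ} |Z − z|^p])^{1/p} : Γ ⊂ ℝ finite, |Γ| ≤ N } and σ_r(Z) := inf_{a∈ℝ} (E|Z − a|^r)^{1/r}. -/

import Mathlib

open MeasureTheory

/-- The optimal `L^p`-mean quantization error at level `N` of a real random variable `Z`: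
the infimum over all finite grids `Γ ⊂ ℝ` with `|Γ| ≤ N` of
`(E[min_{z ∈ Γ} |Z - z|^p])^{1/p}`. -/
noncomputable def quantErr {Ω : Type*} [MeasurableSpace Ω] (μ : Measure Ω)
    (p : ℝ) (Z : Ω → ℝ) (N : ℕ) : ℝ :=
  sInf { e : ℝ | ∃ (Γ : Finset ℝ) (hΓ : Γ.Nonempty), Γ.card ≤ N ∧
    e = (∫ ω, Γ.inf' hΓ (fun z => |Z ω - z| ^ p) ∂μ) ^ (1 / p) }

/-- `σ_r(Z) = inf_{a ∈ ℝ} (E[|Z - a|^r])^{1/r}`. -/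
noncomputable def sigmaQuant {Ω : Type*} [MeasurableSpace Ω] (μ : Measure Ω)
    (r : ℝ) (Z : Ω → ℝ) : ℝ :=
  ⨅ a : ℝ, (∫ ω, |Z ω - a| ^ r ∂μ) ^ (1 / r)


open Finset Real

lemma gap_bound {β u : ℝ} (hβ : 0 < β) (hu : 1 ≤ u) :
    u ^ (-β) - (u+1) ^ (-β) ≤ max β 1 * u ^ (-(β+1)) := by
  have hu0 : 0 < u := by linarith
  have hu1 : 0 < u + 1 := by linarith
  have hA : 0 < u ^ β := Real.rpow_pos_of_pos hu0 _
  have hB : 0 < (u+1) ^ β := Real.rpow_pos_of_pos hu1 _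
  have hnegA : u ^ (-β) = (u ^ β)⁻¹ := Real.rpow_neg hu0.le _
  have hnegB : (u+1) ^ (-β) = ((u+1) ^ β)⁻¹ := Real.rpow_neg hu1.le _
  have hβ1 : u ^ (-(β+1)) = (u ^ β * u)⁻¹ := by
    rw [Real.rpow_neg hu0.le]
    congr 1
    rw [Real.rpow_add_one hu0.ne']
  have hdiv : (u / (u+1)) ^ β = u ^ β / (u+1) ^ β := Real.div_rpow hu0.le hu1.le β
  rcases le_total β 1 with hb | hb
  · -- β ≤ 1
    have hfrac : u / (u+1) ≤ (u / (u+1)) ^ β := by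
      have h := Real.rpow_le_rpow_of_exponent_ge (x := u/(u+1)) (by positivity)
        (by rw [div_le_one hu1]; linarith) hb
      simpa using h
    have hAB : (u+1) ^ β * u ≤ u ^ β * (u+1) := by
      rw [hdiv] at hfrac
      rw [div_le_div_iff₀ hu1 hB] at hfrac
      nlinarith
    have hALEB : u ^ β ≤ (u+1) ^ β := Real.rpow_le_rpow hu0.le (by linarith) hβ.le
    have hmax : (1:ℝ) ≤ max β 1 := le_max_right _ _
    have hinvpos : (0:ℝ) < (u ^ β * u)⁻¹ := by positivity
    rw [hnegA, hnegB, hβ1]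
    have key : (u ^ β)⁻¹ - ((u+1) ^ β)⁻¹ ≤ (u ^ β * u)⁻¹ := by
      rw [inv_sub_inv hA.ne' hB.ne', div_le_iff₀ (by positivity)]
      have h1 : (u ^ β * u)⁻¹ * (u ^ β * (u+1)^β) = (u+1)^β / u := by
        field_simp
      rw [h1, le_div_iff₀ hu0]
      nlinarith
    nlinarith
  · -- 1 ≤ β : Bernoulli with s = -(1/(u+1))
    have hs : (-1:ℝ) ≤ -(1/(u+1)) := by
      have : 1/(u+1) ≤ 1 := by rw [div_le_one hu1]; linarith
      linarith
    have hbern := one_add_mul_self_le_rpow_one_add hs hb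
    have h1s : 1 + -(1/(u+1)) = u/(u+1) := by field_simp; ring
    rw [h1s, hdiv] at hbern
    -- hbern : 1 + β * -(1/(u+1)) ≤ u^β/(u+1)^β
    have hfrac2 : (1 - β/(u+1)) * (u+1)^β ≤ u ^ β := by
      have h2 : 1 + β * -(1/(u+1)) = 1 - β/(u+1) := by ring
      rw [h2] at hbern
      exact (le_div_iff₀ hB).mp hbern
    have hmax : max β 1 = β := max_eq_left hb
    rw [hnegA, hnegB, hβ1, hmax]
    rw [inv_sub_inv hA.ne' hB.ne', div_le_iff₀ (by positivity)]
    have h1 : β * (u ^ β * u)⁻¹ * (u ^ β * (u+1)^β) = β * (u+1)^β / u := by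
      field_simp
    rw [h1, le_div_iff₀ hu0]
    have hexp : (1 - β/(u+1)) * (u+1)^β = (u+1)^β - β*(u+1)^β/(u+1) := by ring
    rw [hexp] at hfrac2
    have hdd : β*(u+1)^β/(u+1) * u ≤ β * (u+1)^β := by
      rw [div_mul_eq_mul_div, div_le_iff₀ hu1]
      nlinarith
    nlinarith

lemma two_trick {t q : ℝ} (ht : 0 ≤ t) (hq : 0 < q) :
    (1 + t) ^ q ≤ 2 ^ q * (1 + t ^ q) := by
  have h2 : (0:ℝ) ≤ 2 := by norm_num
  rcases le_total t 1 with h | h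
  · have h1 : (1 + t) ^ q ≤ 2 ^ q := Real.rpow_le_rpow (by linarith) (by linarith) hq.le
    have h2' : (2:ℝ) ^ q ≤ 2 ^ q * (1 + t ^ q) := by
      have : (1:ℝ) ≤ 1 + t ^ q := by
        have := Real.rpow_nonneg ht q; linarith
      nlinarith [Real.rpow_pos_of_pos (by norm_num : (0:ℝ) < 2) q]
    linarith
  · have h1 : (1 + t) ^ q ≤ (2 * t) ^ q := Real.rpow_le_rpow (by linarith) (by linarith) hq.le
    have h2' : (2 * t) ^ q = 2 ^ q * t ^ q := Real.mul_rpow h2 ht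
    have h3 : (2:ℝ) ^ q * t ^ q ≤ 2 ^ q * (1 + t ^ q) := by
      nlinarith [Real.rpow_pos_of_pos (by norm_num : (0:ℝ) < 2) q]
    linarith


/-- Constant for the covering lemma. -/
noncomputable def Kc (β : ℝ) : ℝ :=
  max β 1 * 2 ^ (β + 2 + 1/β) + (1 - (2:ℝ) ^ (-β)) ^ (-(1/β)) + 1

lemma Kc_pos {β : ℝ} (hβ : 0 < β) : 0 < Kc β := by
  unfold Kc
  have h1 : (0:ℝ) < max β 1 := lt_max_of_lt_right one_pos
  have h2 : (2:ℝ) ^ (-β) < 1 := by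
    apply Real.rpow_lt_one_of_one_lt_of_neg (by norm_num) (by linarith)
  have h3 : (0:ℝ) < (1 - (2:ℝ) ^ (-β)) ^ (-(1/β)) := Real.rpow_pos_of_pos (by linarith) _
  have h4 : (0:ℝ) < (2:ℝ) ^ (β + 2 + 1/β) := Real.rpow_pos_of_pos (by norm_num) _
  nlinarith

lemma one_le_Kc {β : ℝ} (hβ : 0 < β) : 1 ≤ Kc β := by
  unfold Kc
  have h1 : (0:ℝ) < max β 1 := lt_max_of_lt_right one_pos
  have h2 : (2:ℝ) ^ (-β) < 1 :=
    Real.rpow_lt_one_of_one_lt_of_neg (by norm_num) (by linarith)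
  have h3 : (0:ℝ) < (1 - (2:ℝ) ^ (-β)) ^ (-(1/β)) := Real.rpow_pos_of_pos (by linarith) _
  have h4 : (0:ℝ) < (2:ℝ) ^ (β + 2 + 1/β) := Real.rpow_pos_of_pos (by norm_num) _
  nlinarith


noncomputable def gp (β : ℝ) (m k : ℕ) : ℝ := ((m:ℝ)/((m:ℝ) - (k:ℝ))) ^ β - 1

lemma gp_zero {β : ℝ} {m : ℕ} (hm : 1 ≤ m) : gp β m 0 = 0 := by
  have h : ((m:ℝ)) ≠ 0 := by
    simp only [ne_eq, Nat.cast_eq_zero]; omega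
  simp [gp, div_self h]

lemma gp_nonneg {β : ℝ} (hβ : 0 < β) {m k : ℕ} (hk : k < m) : 0 ≤ gp β m k := by
  have h1 : (1:ℝ) ≤ (m:ℝ) - (k:ℝ) := by
    have : (k:ℝ) + 1 ≤ (m:ℝ) := by exact_mod_cast hk
    linarith
  have h2 : (1:ℝ) ≤ (m:ℝ)/((m:ℝ) - (k:ℝ)) := by
    rw [le_div_iff₀ (by linarith)]
    have : (k:ℝ) ≥ 0 := Nat.cast_nonneg k
    linarith
  have := Real.one_le_rpow h2 hβ.le
  simp [gp]; linarith

lemma covering {β : ℝ} (hβ : 0 < β) (M : ℕ) {y : ℝ} (hy : 0 ≤ y) :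
    ∃ k ≤ M, |y - gp β (M+1) k| ≤ Kc β / ((M:ℝ)+1) * (1 + y ^ (1 + 1/β)) := by
  have hyq : 0 ≤ y ^ (1 + 1/β) := Real.rpow_nonneg hy _
  have hmR : (0:ℝ) < (M:ℝ)+1 := by positivity
  have hKc := Kc_pos hβ
  have hKc1 := one_le_Kc hβ
  set S := (Finset.range (M+1)).filter (fun k => gp β (M+1) k ≤ y) with hS
  have h0S : 0 ∈ S := by
    rw [hS, Finset.mem_filter]
    exact ⟨Finset.mem_range.mpr (by omega), by rw [gp_zero (by omega)]; exact hy⟩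
  have hSne : S.Nonempty := ⟨0, h0S⟩
  set k := S.max' hSne with hk
  clear_value k
  have hkS : k ∈ S := hk ▸ S.max'_mem hSne
  have hkM : k ≤ M := by
    have := (Finset.mem_filter.mp hkS).1
    rw [Finset.mem_range] at this; omega
  have hxky : gp β (M+1) k ≤ y := (Finset.mem_filter.mp hkS).2
  have hgpk0 : 0 ≤ gp β (M+1) k := gp_nonneg hβ (by omega)
  refine ⟨k, hkM, ?_⟩
  rw [abs_of_nonneg (by linarith)]
  by_cases hkMeq : k = M
  · -- tail case
    subst hkMeq
    have hmM : ((k+1:ℕ):ℝ) - (k:ℝ) = 1 := by push_cast; ring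
    have hgpM : gp β (k+1) k = ((k:ℝ)+1) ^ β - 1 := by
      rw [gp, hmM, div_one]
      push_cast
      ring_nf
    rcases Nat.eq_zero_or_pos k with h0 | hMpos
    · -- M = 0
      subst h0
      have hgp0 : gp β (0+1) 0 = 0 := gp_zero (by omega)
      rw [hgp0, sub_zero]
      have hy1 : y ≤ 1 + y ^ (1 + 1/β) := by
        rcases le_total y 1 with h | h
        · linarith
        · have h2 : y ^ (1:ℝ) ≤ y ^ (1 + 1/β) :=
            Real.rpow_le_rpow_of_exponent_le h
              (by have := one_div_pos.mpr hβ; linarith)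
          rw [Real.rpow_one] at h2
          linarith
      calc y ≤ 1 + y ^ (1 + 1/β) := hy1
        _ = 1 * (1 + y ^ (1 + 1/β)) := (one_mul _).symm
        _ ≤ Kc β / (((0:ℕ):ℝ)+1) * (1 + y ^ (1 + 1/β)) := by
            apply mul_le_mul_of_nonneg_right _ (by linarith)
            simp only [Nat.cast_zero, zero_add, div_one]
            exact hKc1
    · -- M = k ≥ 1
      set c : ℝ := 1 - (2:ℝ) ^ (-β) with hc
      have h2b1 : (2:ℝ) ^ (-β) < 1 :=
        Real.rpow_lt_one_of_one_lt_of_neg (by norm_num) (by linarith)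
      have h2b0 : (0:ℝ) < (2:ℝ) ^ (-β) := Real.rpow_pos_of_pos (by norm_num) _
      have hcpos : 0 < c := by rw [hc]; linarith
      have hc1 : c ≤ 1 := by rw [hc]; linarith
      have hm2 : (2:ℝ) ≤ (k:ℝ)+1 := by
        have : (1:ℝ) ≤ (k:ℝ) := by exact_mod_cast hMpos
        linarith
      have hmR' : (0:ℝ) < (k:ℝ)+1 := by positivity
      have hmβpos : (0:ℝ) < ((k:ℝ)+1) ^ β := Real.rpow_pos_of_pos hmR' _
      have hhalf : (1:ℝ) ≤ (2:ℝ)^(-β) * ((k:ℝ)+1) ^ β := by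
        have h1 : ((k:ℝ)+1)/2 ≥ 1 := by linarith
        have h2 : (1:ℝ) ≤ (((k:ℝ)+1)/2) ^ β := Real.one_le_rpow h1 hβ.le
        have h3 : (((k:ℝ)+1)/2) ^ β = ((k:ℝ)+1)^β / 2^β := Real.div_rpow (by linarith) (by norm_num) β
        have h4 : (2:ℝ)^(-β) = ((2:ℝ)^β)⁻¹ := Real.rpow_neg (by norm_num) β
        have h5 : (0:ℝ) < (2:ℝ)^β := Real.rpow_pos_of_pos (by norm_num) β
        rw [h4]
        rw [h3, le_div_iff₀ h5] at h2
        rw [mul_comm, ← div_eq_mul_inv, le_div_iff₀ h5]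
        linarith
      have hycm : c * ((k:ℝ)+1)^β ≤ y := by
        rw [hgpM] at hxky
        have hcm : c * ((k:ℝ)+1)^β ≤ ((k:ℝ)+1)^β - 1 := by rw [hc]; nlinarith
        linarith
      have hy0 : 0 < y := lt_of_lt_of_le (by positivity) hycm
      have hkey : y ≤ y ^ (1 + 1/β) * (c ^ (-(1/β)) / ((k:ℝ)+1)) := by
        have h1 : (c * ((k:ℝ)+1)^β) ^ (1/β) ≤ y ^ (1/β) :=
          Real.rpow_le_rpow (by positivity) hycm (by positivity)
        have h2 : (c * ((k:ℝ)+1)^β) ^ (1/β) = c^(1/β) * ((k:ℝ)+1) := by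
          rw [Real.mul_rpow hcpos.le hmβpos.le]
          congr 1
          rw [← Real.rpow_mul (le_of_lt hmR'), mul_one_div_cancel hβ.ne', Real.rpow_one]
        have h3 : (0:ℝ) < c^(1/β) * ((k:ℝ)+1) := by positivity
        have h4 : y ^ (-(1/β)) ≤ (c^(1/β) * ((k:ℝ)+1))⁻¹ := by
          rw [Real.rpow_neg hy0.le]
          exact inv_anti₀ h3 (h2 ▸ h1)
        have h5 : (c^(1/β) * ((k:ℝ)+1))⁻¹ = c ^ (-(1/β)) / ((k:ℝ)+1) := by
          rw [mul_inv, Real.rpow_neg hcpos.le]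
          exact (div_eq_mul_inv _ _).symm
        have h6 : y ^ (1 + 1/β) * y ^ (-(1/β)) = y := by
          rw [← Real.rpow_add hy0]
          norm_num
        calc y = y ^ (1 + 1/β) * y ^ (-(1/β)) := h6.symm
          _ ≤ y ^ (1 + 1/β) * (c ^ (-(1/β)) / ((k:ℝ)+1)) := by
              apply mul_le_mul_of_nonneg_left _ (Real.rpow_nonneg hy0.le _)
              rw [← h5]; exact h4
      have hcK : c ^ (-(1/β)) ≤ Kc β := by
        have h1 : (0:ℝ) < max β 1 := lt_max_of_lt_right one_pos
        have h4 : (0:ℝ) < (2:ℝ) ^ (β + 2 + 1/β) := Real.rpow_pos_of_pos (by norm_num) _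
        unfold Kc
        rw [← hc]
        nlinarith
      calc y - gp β (k+1) k ≤ y := by linarith
        _ ≤ y ^ (1 + 1/β) * (c ^ (-(1/β)) / ((k:ℝ)+1)) := hkey
        _ ≤ (1 + y ^ (1 + 1/β)) * (Kc β / ((k:ℝ)+1)) := by
            apply mul_le_mul (by linarith) (by gcongr) (by positivity) (by linarith)
        _ = Kc β / ((k:ℝ)+1) * (1 + y ^ (1 + 1/β)) := by ring
  · -- k < M
    have hkltM : k < M := lt_of_le_of_ne hkM hkMeq
    have hk1S : k + 1 ∉ S := by
      intro h
      have h2 := S.le_max' (k+1) h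
      rw [← hk] at h2
      omega
    have hylt : y < gp β (M+1) (k+1) := by
      by_contra h
      push_neg at h
      exact hk1S (Finset.mem_filter.mpr ⟨Finset.mem_range.mpr (by omega), h⟩)
    set u : ℝ := ((M:ℝ)+1) - (k:ℝ) - 1 with hu
    have hu1 : (1:ℝ) ≤ u := by
      have : (k:ℝ) + 1 ≤ (M:ℝ) := by exact_mod_cast hkltM
      rw [hu]; linarith
    have hu0 : (0:ℝ) < u := by linarith
    have hm0 : (0:ℝ) < (M:ℝ)+1 := hmR
    have hmcast : ((M+1:ℕ):ℝ) = (M:ℝ)+1 := by push_cast; ring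
    have hcast1 : ((M+1:ℕ):ℝ) - ((k+1:ℕ):ℝ) = u := by rw [hu]; push_cast; ring
    have hcast0 : ((M+1:ℕ):ℝ) - (k:ℝ) = u + 1 := by rw [hu]; push_cast; ring
    have hgpk : gp β (M+1) k = (((M:ℝ)+1)/(u+1)) ^ β - 1 := by rw [gp, hcast0, hmcast]
    have hgpk1 : gp β (M+1) (k+1) = (((M:ℝ)+1)/u) ^ β - 1 := by rw [gp, hcast1, hmcast]
    have hMβ : (0:ℝ) < ((M:ℝ)+1)^β := Real.rpow_pos_of_pos hm0 _
    have e1 : (((M:ℝ)+1)/u) ^ β = ((M:ℝ)+1)^β * u ^ (-β) := by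
      rw [Real.div_rpow hm0.le hu0.le, Real.rpow_neg hu0.le, div_eq_mul_inv]
    have e2 : (((M:ℝ)+1)/(u+1)) ^ β = ((M:ℝ)+1)^β * (u+1) ^ (-β) := by
      rw [Real.div_rpow hm0.le (by linarith), Real.rpow_neg (by linarith), div_eq_mul_inv]
    have hgap : gp β (M+1) (k+1) - gp β (M+1) k
        ≤ ((M:ℝ)+1)^β * (max β 1 * u ^ (-(β+1))) := by
      rw [hgpk, hgpk1, e1, e2]
      have hgb := gap_bound hβ hu1
      calc ((M:ℝ)+1)^β * u^(-β) - 1 - (((M:ℝ)+1)^β * (u+1)^(-β) - 1)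
          = ((M:ℝ)+1)^β * (u^(-β) - (u+1)^(-β)) := by ring
        _ ≤ _ := mul_le_mul_of_nonneg_left hgb hMβ.le
    have hP : (0:ℝ) < u^(β+1) := Real.rpow_pos_of_pos hu0 _
    have hQ : (0:ℝ) < (u+1)^(β+1) := Real.rpow_pos_of_pos (by linarith) _
    have h2p : (0:ℝ) < (2:ℝ)^(β+1) := Real.rpow_pos_of_pos (by norm_num) _
    have hle : (u+1)^(β+1) ≤ 2^(β+1) * u^(β+1) := by
      calc (u+1)^(β+1) ≤ (2*u)^(β+1) :=
            Real.rpow_le_rpow (by linarith) (by linarith) (by linarith)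
        _ = 2^(β+1) * u^(β+1) := Real.mul_rpow (by norm_num) hu0.le
    have h2u : u ^ (-(β+1)) ≤ 2^(β+1) * (u+1)^(-(β+1)) := by
      rw [Real.rpow_neg hu0.le, Real.rpow_neg (by linarith : (0:ℝ) ≤ u+1)]
      calc (u^(β+1))⁻¹ = 2^(β+1) * (2^(β+1) * u^(β+1))⁻¹ := by
            rw [mul_inv, ← mul_assoc, mul_inv_cancel₀ h2p.ne', one_mul]
        _ ≤ 2^(β+1) * ((u+1)^(β+1))⁻¹ :=
            mul_le_mul_of_nonneg_left (inv_anti₀ hQ hle) h2p.le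
    have e3 : ((M:ℝ)+1)^β * (u+1)^(-(β+1)) = (((M:ℝ)+1)/(u+1))^(β+1) / ((M:ℝ)+1) := by
      rw [Real.div_rpow hm0.le (by linarith : (0:ℝ) ≤ u+1),
        Real.rpow_neg (by linarith : (0:ℝ) ≤ u+1), Real.rpow_add_one hm0.ne' β]
      field_simp
    have hxk' : (((M:ℝ)+1)/(u+1)) ^ β ≤ 1 + y := by rw [hgpk] at hxky; linarith
    have hbase : (0:ℝ) ≤ ((M:ℝ)+1)/(u+1) := by positivity
    have h1y : (((M:ℝ)+1)/(u+1))^(β+1) ≤ (1+y)^(1+1/β) := by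
      have e : ((((M:ℝ)+1)/(u+1))^β)^(1+1/β) = (((M:ℝ)+1)/(u+1))^(β+1) := by
        rw [← Real.rpow_mul hbase]
        congr 1
        field_simp
      rw [← e]
      exact Real.rpow_le_rpow (Real.rpow_nonneg hbase β) hxk' (by positivity)
    have htt : (1+y)^(1+1/β) ≤ 2^(1+1/β) * (1 + y^(1+1/β)) := two_trick hy (by positivity)
    have hy1q : (0:ℝ) ≤ 1 + y^(1+1/β) := by linarith
    have hmaxpos : (0:ℝ) < max β 1 := lt_max_of_lt_right one_pos
    have h2pq : (0:ℝ) < (2:ℝ)^(1+1/β) := Real.rpow_pos_of_pos (by norm_num) _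
    have hexp2 : (2:ℝ)^(β+1) * (2:ℝ)^(1+1/β) = (2:ℝ)^(β+2+1/β) := by
      rw [← Real.rpow_add (by norm_num : (0:ℝ) < 2)]
      congr 1
      ring
    have hKcterm : max β 1 * (2:ℝ)^(β+2+1/β) ≤ Kc β := by
      have h2b1 : (2:ℝ) ^ (-β) < 1 :=
        Real.rpow_lt_one_of_one_lt_of_neg (by norm_num) (by linarith)
      have h3 : (0:ℝ) < (1 - (2:ℝ) ^ (-β)) ^ (-(1/β)) := Real.rpow_pos_of_pos (by linarith) _
      unfold Kc
      linarith
    calc y - gp β (M+1) k ≤ gp β (M+1) (k+1) - gp β (M+1) k := by linarith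
      _ ≤ ((M:ℝ)+1)^β * (max β 1 * u ^ (-(β+1))) := hgap
      _ ≤ ((M:ℝ)+1)^β * (max β 1 * (2^(β+1) * (u+1)^(-(β+1)))) := by
          apply mul_le_mul_of_nonneg_left _ hMβ.le
          exact mul_le_mul_of_nonneg_left h2u hmaxpos.le
      _ = max β 1 * 2^(β+1) * (((M:ℝ)+1)^β * (u+1)^(-(β+1))) := by ring
      _ = max β 1 * 2^(β+1) * ((((M:ℝ)+1)/(u+1))^(β+1) / ((M:ℝ)+1)) := by rw [e3]
      _ ≤ max β 1 * 2^(β+1) * ((1+y)^(1+1/β) / ((M:ℝ)+1)) := by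
          apply mul_le_mul_of_nonneg_left _ (by positivity)
          gcongr
      _ ≤ max β 1 * 2^(β+1) * ((2^(1+1/β) * (1 + y^(1+1/β))) / ((M:ℝ)+1)) := by
          apply mul_le_mul_of_nonneg_left _ (by positivity)
          gcongr
      _ = max β 1 * (2^(β+1) * 2^(1+1/β)) / ((M:ℝ)+1) * (1 + y^(1+1/β)) := by ring
      _ = max β 1 * 2^(β+2+1/β) / ((M:ℝ)+1) * (1 + y^(1+1/β)) := by rw [hexp2]
      _ ≤ Kc β / ((M:ℝ)+1) * (1 + y^(1+1/β)) := by gcongr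

lemma quantErr_set_bddBelow {Ω : Type*} [MeasurableSpace Ω] (μ : Measure Ω)
    (p : ℝ) (Z : Ω → ℝ) (N : ℕ) :
    BddBelow { e : ℝ | ∃ (Γ : Finset ℝ) (hΓ : Γ.Nonempty), Γ.card ≤ N ∧
      e = (∫ ω, Γ.inf' hΓ (fun z => |Z ω - z| ^ p) ∂μ) ^ (1 / p) } := by
  refine ⟨0, ?_⟩
  rintro e ⟨Γ, hΓ, -, rfl⟩
  apply Real.rpow_nonneg
  apply integral_nonneg
  intro ω
  exact Finset.le_inf' hΓ _ (fun z _ => Real.rpow_nonneg (abs_nonneg _) p)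

lemma quantErr_le {Ω : Type*} [MeasurableSpace Ω] (μ : Measure Ω) (p : ℝ) (Z : Ω → ℝ)
    (N : ℕ) (Γ : Finset ℝ) (hΓ : Γ.Nonempty) (hc : Γ.card ≤ N) :
    quantErr μ p Z N ≤ (∫ ω, Γ.inf' hΓ (fun z => |Z ω - z| ^ p) ∂μ) ^ (1/p) :=
  csInf_le (quantErr_set_bddBelow μ p Z N) ⟨Γ, hΓ, hc, rfl⟩

lemma per_a {Ω : Type} [MeasurableSpace Ω] (ℙ : Measure Ω) [IsProbabilityMeasure ℙ]
    {p δ : ℝ} (hp : 0 < p) (hδ : 0 < δ) (Z : Ω → ℝ)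
    (hZ : MemLp Z (ENNReal.ofReal (p + δ)) ℙ) (N : ℕ) (hN : 1 ≤ N) (a : ℝ) :
    quantErr ℙ p Z N ≤ (2 ^ ((p+1)/p + 1) * Kc (p/δ)) * (N:ℝ)⁻¹ *
      (∫ ω, |Z ω - a| ^ (p+δ) ∂ℙ) ^ (1/(p+δ)) := by
  set r : ℝ := p + δ with hrdef
  have hr : 0 < r := by rw [hrdef]; linarith
  set β : ℝ := p / δ with hβdef
  have hβ : 0 < β := div_pos hp hδ
  have hKc := Kc_pos hβ
  set I : ℝ := ∫ ω, |Z ω - a| ^ r ∂ℙ with hIdef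
  have hInt : Integrable (fun ω => |Z ω - a| ^ r) ℙ := by
    have h1 : MemLp (fun ω => Z ω - a) (ENNReal.ofReal r) ℙ := hZ.sub (memLp_const a)
    have h2 := h1.integrable_norm_rpow (by simp [ENNReal.ofReal_eq_zero]; linarith)
      ENNReal.ofReal_ne_top
    simpa [Real.norm_eq_abs, ENNReal.toReal_ofReal hr.le] using h2
  have hI : 0 ≤ I := integral_nonneg (fun ω => Real.rpow_nonneg (abs_nonneg _) _)
  have hNR : (0:ℝ) < (N:ℝ) := by exact_mod_cast hN
  have hCpos : (0:ℝ) < 2 ^ ((p+1)/p + 1) * Kc β :=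
    mul_pos (Real.rpow_pos_of_pos (by norm_num) _) hKc
  rcases hI.eq_or_lt with hI0 | hIpos
  · -- degenerate case
    have hae : (fun ω => |Z ω - a| ^ r) =ᵐ[ℙ] 0 :=
      (integral_eq_zero_iff_of_nonneg (fun ω => Real.rpow_nonneg (abs_nonneg _) _) hInt).mp
        hI0.symm
    have hae2 : (fun ω => |Z ω - a| ^ p) =ᵐ[ℙ] (0 : Ω → ℝ) := by
      filter_upwards [hae] with ω h
      simp only [Pi.zero_apply] at h ⊢
      have h0 : |Z ω - a| = 0 := by
        by_contra hne
        have habs : 0 < |Z ω - a| := lt_of_le_of_ne (abs_nonneg _) (Ne.symm hne)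
        exact absurd h (ne_of_gt (Real.rpow_pos_of_pos habs r))
      rw [h0, Real.zero_rpow hp.ne']
    have hsingle : ∀ ω, (({a} : Finset ℝ).inf' ⟨a, Finset.mem_singleton_self a⟩
        (fun z => |Z ω - z| ^ p)) = |Z ω - a| ^ p := fun ω => by simp
    have hzero : (∫ ω, ({a} : Finset ℝ).inf' ⟨a, Finset.mem_singleton_self a⟩
        (fun z => |Z ω - z| ^ p) ∂ℙ) = 0 := by
      rw [show (fun ω => ({a} : Finset ℝ).inf' ⟨a, Finset.mem_singleton_self a⟩
        (fun z => |Z ω - z| ^ p)) = fun ω => |Z ω - a| ^ p from funext hsingle]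
      rw [integral_congr_ae hae2]
      simp
    calc quantErr ℙ p Z N
        ≤ (∫ ω, ({a} : Finset ℝ).inf' ⟨a, Finset.mem_singleton_self a⟩
            (fun z => |Z ω - z| ^ p) ∂ℙ) ^ (1/p) :=
          quantErr_le ℙ p Z N {a} ⟨a, Finset.mem_singleton_self a⟩
            (by simpa using hN)
      _ = 0 := by rw [hzero, Real.zero_rpow (by positivity)]
      _ ≤ _ := by
          apply mul_nonneg (mul_nonneg hCpos.le (by positivity))
          exact Real.rpow_nonneg hI _
  · -- I > 0
    set s : ℝ := I ^ (1/r) with hsdef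
    have hs : 0 < s := Real.rpow_pos_of_pos hIpos _
    have hsr : s ^ r = I := by
      rw [hsdef, ← Real.rpow_mul hI, one_div_mul_cancel hr.ne', Real.rpow_one]
    set M : ℕ := (N-1)/2 with hMdef
    have hM1R : (0:ℝ) < (M:ℝ) + 1 := by positivity
    have hNm : (N:ℝ) ≤ 2 * ((M:ℝ)+1) := by
      have h : N ≤ 2 * (M + 1) := by omega
      exact_mod_cast h
    set Γ : Finset ℝ := insert a
      (((Finset.Icc 1 M).image fun k => a + s * gp β (M+1) k) ∪
       ((Finset.Icc 1 M).image fun k => a - s * gp β (M+1) k)) with hΓdef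
    have haΓ : a ∈ Γ := Finset.mem_insert_self _ _
    have hcard : Γ.card ≤ N := by
      have h1 := Finset.card_insert_le a
        (((Finset.Icc 1 M).image fun k => a + s * gp β (M+1) k) ∪
         ((Finset.Icc 1 M).image fun k => a - s * gp β (M+1) k))
      have h2 := Finset.card_union_le
        ((Finset.Icc 1 M).image fun k => a + s * gp β (M+1) k)
        ((Finset.Icc 1 M).image fun k => a - s * gp β (M+1) k)
      have h3 := Finset.card_image_le (s := Finset.Icc 1 M)
        (f := fun k => a + s * gp β (M+1) k)
      have h4 := Finset.card_image_le (s := Finset.Icc 1 M)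
        (f := fun k => a - s * gp β (M+1) k)
      have h5 : (Finset.Icc 1 M).card = M := by simp
      rw [hΓdef]
      omega
    have hmemp : ∀ k ≤ M, a + s * gp β (M+1) k ∈ Γ := by
      intro k hk
      rcases Nat.eq_zero_or_pos k with rfl | hk0
      · rw [gp_zero (by omega)]
        simpa using haΓ
      · exact Finset.mem_insert_of_mem (Finset.mem_union_left _
          (Finset.mem_image.mpr ⟨k, Finset.mem_Icc.mpr ⟨hk0, hk⟩, rfl⟩))
    have hmemm : ∀ k ≤ M, a - s * gp β (M+1) k ∈ Γ := by
      intro k hk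
      rcases Nat.eq_zero_or_pos k with rfl | hk0
      · rw [gp_zero (by omega)]
        simpa using haΓ
      · exact Finset.mem_insert_of_mem (Finset.mem_union_right _
          (Finset.mem_image.mpr ⟨k, Finset.mem_Icc.mpr ⟨hk0, hk⟩, rfl⟩))
    set D : ℝ := (s * (Kc β / ((M:ℝ)+1))) ^ p * 2 ^ p with hDdef
    have hXpos : 0 < s * (Kc β / ((M:ℝ)+1)) := by positivity
    have hDpos : 0 < D := by
      rw [hDdef]
      positivity
    have hexps : (1 + 1/β) * p = r := by
      rw [hβdef, hrdef]
      field_simp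
    have hpt : ∀ ω, Γ.inf' ⟨a, haΓ⟩ (fun z => |Z ω - z| ^ p)
        ≤ D + D / I * |Z ω - a| ^ r := by
      intro ω
      set w : ℝ := Z ω - a with hwdef
      have hy : (0:ℝ) ≤ |w| / s := by positivity
      obtain ⟨k, hkM, hcov⟩ := covering hβ M hy
      set x : ℝ := gp β (M+1) k with hxdef
      obtain ⟨z, hzΓ, habs⟩ : ∃ z ∈ Γ, |Z ω - z| = s * |(|w|/s - x)| := by
        rcases le_or_gt 0 w with hw | hw
        · refine ⟨a + s * x, hmemp k hkM, ?_⟩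
          have h1 : Z ω - (a + s * x) = s * (|w|/s - x) := by
            rw [abs_of_nonneg hw, hwdef]
            field_simp
            ring
          rw [h1, abs_mul, abs_of_pos hs]
        · refine ⟨a - s * x, hmemm k hkM, ?_⟩
          have h1 : Z ω - (a - s * x) = -(s * (|w|/s - x)) := by
            rw [abs_of_neg hw, hwdef]
            field_simp
            ring
          rw [h1, abs_neg, abs_mul, abs_of_pos hs]
      have step1 : Γ.inf' ⟨a, haΓ⟩ (fun z => |Z ω - z| ^ p) ≤ |Z ω - z| ^ p :=
        Finset.inf'_le _ hzΓ
      have hq : (0:ℝ) ≤ (|w|/s) ^ (1+1/β) := Real.rpow_nonneg hy _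
      have step2 : |Z ω - z| ^ p
          ≤ (s * (Kc β / ((M:ℝ)+1)) * (1 + (|w|/s) ^ (1+1/β))) ^ p := by
        apply Real.rpow_le_rpow (abs_nonneg _) _ hp.le
        rw [habs]
        calc s * |(|w|/s - x)| ≤ s * (Kc β / ((M:ℝ)+1) * (1 + (|w|/s) ^ (1+1/β))) :=
              mul_le_mul_of_nonneg_left hcov hs.le
          _ = s * (Kc β / ((M:ℝ)+1)) * (1 + (|w|/s) ^ (1+1/β)) := by ring
      have step3 : (s * (Kc β / ((M:ℝ)+1)) * (1 + (|w|/s) ^ (1+1/β))) ^ p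
          = (s * (Kc β / ((M:ℝ)+1))) ^ p * (1 + (|w|/s) ^ (1+1/β)) ^ p :=
        Real.mul_rpow hXpos.le (by linarith)
      have step4 : (1 + (|w|/s) ^ (1+1/β)) ^ p ≤ 2 ^ p * (1 + ((|w|/s) ^ (1+1/β)) ^ p) :=
        two_trick hq hp
      have step5 : ((|w|/s) ^ (1+1/β)) ^ p = |w| ^ r / I := by
        rw [← Real.rpow_mul hy, hexps, Real.div_rpow (abs_nonneg _) hs.le, hsr]
      calc Γ.inf' ⟨a, haΓ⟩ (fun z => |Z ω - z| ^ p) ≤ |Z ω - z| ^ p := step1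
        _ ≤ _ := step2
        _ = (s * (Kc β / ((M:ℝ)+1))) ^ p * (1 + (|w|/s) ^ (1+1/β)) ^ p := step3
        _ ≤ (s * (Kc β / ((M:ℝ)+1))) ^ p * (2 ^ p * (1 + ((|w|/s) ^ (1+1/β)) ^ p)) :=
            mul_le_mul_of_nonneg_left step4 (by positivity)
        _ = D + D / I * |w| ^ r := by
            rw [step5, hDdef]
            ring
    have hgInt : Integrable (fun ω => D + D / I * |Z ω - a| ^ r) ℙ :=
      (integrable_const D).add (hInt.const_mul (D / I))
    have hfnn : 0 ≤ᵐ[ℙ] fun ω => Γ.inf' ⟨a, haΓ⟩ (fun z => |Z ω - z| ^ p) :=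
      Filter.Eventually.of_forall fun ω =>
        Finset.le_inf' _ _ (fun z _ => Real.rpow_nonneg (abs_nonneg _) p)
    have hle := integral_mono_of_nonneg hfnn hgInt (Filter.Eventually.of_forall hpt)
    have hgval : (∫ ω, (D + D / I * |Z ω - a| ^ r) ∂ℙ) = 2 * D := by
      rw [integral_add (integrable_const D) (hInt.const_mul (D / I)),
        integral_const, integral_const_mul]
      simp only [measure_univ, probReal_univ, ENNReal.toReal_one, smul_eq_mul, one_mul]
      rw [← hIdef, div_mul_cancel₀ _ hIpos.ne']
      ring
    have hq1 : quantErr ℙ p Z N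
        ≤ (∫ ω, Γ.inf' ⟨a, haΓ⟩ (fun z => |Z ω - z| ^ p) ∂ℙ) ^ (1/p) :=
      quantErr_le ℙ p Z N Γ ⟨a, haΓ⟩ hcard
    have hq2 : (∫ ω, Γ.inf' ⟨a, haΓ⟩ (fun z => |Z ω - z| ^ p) ∂ℙ) ^ (1/p)
        ≤ (2 * D) ^ (1/p) := by
      apply Real.rpow_le_rpow
        (integral_nonneg fun ω => Finset.le_inf' _ _
          (fun z _ => Real.rpow_nonneg (abs_nonneg _) p))
        (hle.trans hgval.le) (by positivity)
    have hval : (2 * D) ^ (1/p) = 2 ^ ((p+1)/p) * (s * (Kc β / ((M:ℝ)+1))) := by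
      have h1 : 2 * D = (2:ℝ) ^ (p+1) * (s * (Kc β / ((M:ℝ)+1))) ^ p := by
        rw [hDdef, Real.rpow_add_one (by norm_num : (2:ℝ) ≠ 0)]
        ring
      rw [h1, Real.mul_rpow (by positivity) (by positivity),
        ← Real.rpow_mul (by norm_num : (0:ℝ) ≤ 2),
        ← Real.rpow_mul hXpos.le, mul_one_div, mul_one_div_cancel hp.ne', Real.rpow_one]
    have hfinal : 2 ^ ((p+1)/p) * (s * (Kc β / ((M:ℝ)+1)))
        ≤ 2 ^ ((p+1)/p + 1) * Kc β * (N:ℝ)⁻¹ * s := by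
      have h2 : Kc β / ((M:ℝ)+1) ≤ 2 * Kc β * (N:ℝ)⁻¹ := by
        rw [div_le_iff₀ hM1R]
        have h3 : (1:ℝ) ≤ 2 * ((M:ℝ)+1) * (N:ℝ)⁻¹ := by
          rw [← div_eq_mul_inv, le_div_iff₀ hNR]
          linarith
        nlinarith [hKc]
      calc 2 ^ ((p+1)/p) * (s * (Kc β / ((M:ℝ)+1)))
          ≤ 2 ^ ((p+1)/p) * (s * (2 * Kc β * (N:ℝ)⁻¹)) := by
            apply mul_le_mul_of_nonneg_left _ (by positivity)
            exact mul_le_mul_of_nonneg_left h2 hs.le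
        _ = (2 ^ ((p+1)/p) * 2) * Kc β * (N:ℝ)⁻¹ * s := by ring
        _ = 2 ^ ((p+1)/p + 1) * Kc β * (N:ℝ)⁻¹ * s := by
            rw [← Real.rpow_add_one (by norm_num : (2:ℝ) ≠ 0)]
    calc quantErr ℙ p Z N ≤ (2*D) ^ (1/p) := hq1.trans hq2
      _ = 2 ^ ((p+1)/p) * (s * (Kc β / ((M:ℝ)+1))) := hval
      _ ≤ 2 ^ ((p+1)/p + 1) * Kc β * (N:ℝ)⁻¹ * s := hfinal


/-- **Zador's theorem, non-asymptotic upper bound (Pierce's lemma, one-dimensional case).**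
For every `p ∈ (0,∞)` and `δ > 0` there is a constant `C_{p,δ} ∈ (0,∞)` such that for every
real random variable `Z ∈ L^{p+δ}(ℙ)` and every `N ≥ 1`,
`e_{N,p}(Z) ≤ C_{p,δ} · σ_{p+δ}(Z) · N⁻¹`. -/
theorem zador_nonasymptotic_upper_bound (p δ : ℝ) (hp : 0 < p) (hδ : 0 < δ) :
    ∃ C : ℝ, 0 < C ∧
      ∀ (Ω : Type) (mΩ : MeasurableSpace Ω) (ℙ : Measure Ω), IsProbabilityMeasure ℙ →
        ∀ Z : Ω → ℝ, Measurable Z → MemLp Z (ENNReal.ofReal (p + δ)) ℙ →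
          ∀ N : ℕ, 1 ≤ N →
            quantErr ℙ p Z N ≤ C * sigmaQuant ℙ (p + δ) Z * (N : ℝ)⁻¹ := by
  have hβ : 0 < p / δ := div_pos hp hδ
  refine ⟨2 ^ ((p+1)/p + 1) * Kc (p/δ),
    mul_pos (Real.rpow_pos_of_pos (by norm_num) _) (Kc_pos hβ), ?_⟩
  intro Ω mΩ ℙ hprob Z hZm hZ N hN
  haveI := hprob
  have hNR : (0:ℝ) < (N:ℝ) := by exact_mod_cast hN
  set C : ℝ := 2 ^ ((p+1)/p + 1) * Kc (p/δ) with hCdef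
  have hC : 0 < C := mul_pos (Real.rpow_pos_of_pos (by norm_num) _) (Kc_pos hβ)
  have ht : 0 < C * (N:ℝ)⁻¹ := by positivity
  have key : ∀ a : ℝ, quantErr ℙ p Z N
      ≤ C * (N:ℝ)⁻¹ * (∫ ω, |Z ω - a| ^ (p+δ) ∂ℙ) ^ (1/(p+δ)) :=
    fun a => per_a ℙ hp hδ Z hZ N hN a
  have h2 : quantErr ℙ p Z N / (C * (N:ℝ)⁻¹) ≤ sigmaQuant ℙ (p + δ) Z := by
    rw [sigmaQuant]
    apply le_ciInf
    intro a
    rw [div_le_iff₀ ht]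
    calc quantErr ℙ p Z N ≤ C * (N:ℝ)⁻¹ * (∫ ω, |Z ω - a| ^ (p+δ) ∂ℙ) ^ (1/(p+δ)) := key a
      _ = (∫ ω, |Z ω - a| ^ (p+δ) ∂ℙ) ^ (1/(p+δ)) * (C * (N:ℝ)⁻¹) := by ring
  calc quantErr ℙ p Z N = quantErr ℙ p Z N / (C * (N:ℝ)⁻¹) * (C * (N:ℝ)⁻¹) := by
        field_simp
    _ ≤ sigmaQuant ℙ (p + δ) Z * (C * (N:ℝ)⁻¹) :=
        mul_le_mul_of_nonneg_right h2 ht.le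
    _ = C * sigmaQuant ℙ (p + δ) Z * (N:ℝ)⁻¹ := by ring
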